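/- Let n and r be positive natural numbers and let x and y be two distinct nonzero vectors in 𝔽₂ⁿ. If H is a matrix chosen uniformly at random from all r × n matrices over 𝔽₂, then the probability that both H·x = 0 and H·y = 0 is exactly 2^(−2r). In particular, the events {x ∈ ker H} and {y ∈ ker H} are pairwise independent. -/

import Mathlib

open Finset

private lemma aux_card_ker {V W : Type*} [AddGroup V] [AddGroup W] [Fintype V] [Fintype W]
    [DecidableEq W] (f : V →+ W) (hf : Function.Surjective f) :
    (Finset.univ.filter (fun v => f v = 0)).card * Fintype.card W = Fintype.card V := by
  classical
  have h1 : (Finset.univ.filter (fun v => f v = 0)).card = Nat.card f.ker := by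
    rw [Nat.card_eq_fintype_card, Fintype.card_subtype]
    congr 1
    apply Finset.filter_congr
    intro v _
    simp [AddMonoidHom.mem_ker]
  have h2 := AddSubgroup.card_eq_card_quotient_mul_card_addSubgroup f.ker
  have h3 : Nat.card (V ⧸ f.ker) = Fintype.card W := by
    rw [Nat.card_congr (QuotientAddGroup.quotientKerEquivOfSurjective f hf).toEquiv,
      Nat.card_eq_fintype_card]
  rw [h1, ← Nat.card_eq_fintype_card (α := V), h2, h3, mul_comm]

private def mulVecHom (n r : ℕ) (z : Fin n → ZMod 2) :
    Matrix (Fin r) (Fin n) (ZMod 2) →+ (Fin r → ZMod 2) where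
  toFun H := H.mulVec z
  map_zero' := Matrix.zero_mulVec z
  map_add' A B := Matrix.add_mulVec A B z

private lemma zmod2_cases : ∀ a : ZMod 2, a = 0 ∨ a = 1 := by decide

private lemma exists_dot_zero_one (n : ℕ) (x y : Fin n → ZMod 2) (hy : y ≠ 0)
    (j : Fin n) (hj1 : x j = 1) (hj0 : y j = 0) :
    ∃ q : Fin n → ZMod 2, dotProduct q x = 0 ∧ dotProduct q y = 1 := by
  obtain ⟨i, hi⟩ : ∃ i, y i ≠ 0 := by
    by_contra h; push_neg at h; exact hy (funext fun i => h i)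
  have hyi : y i = 1 := (zmod2_cases (y i)).resolve_left hi
  rcases zmod2_cases (x i) with hxi | hxi
  · exact ⟨Pi.single i 1, by simp [single_dotProduct, hxi],
      by simp [single_dotProduct, hyi]⟩
  · refine ⟨Pi.single i 1 + Pi.single j 1, ?_, ?_⟩
    · rw [add_dotProduct]; simp [single_dotProduct, hxi, hj1]; decide
    · rw [add_dotProduct]; simp [single_dotProduct, hyi, hj0]

private lemma exists_dot (n : ℕ) (x y : Fin n → ZMod 2) (hx : x ≠ 0) (hy : y ≠ 0)
    (hxy : x ≠ y) (a b : ZMod 2) :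
    ∃ v : Fin n → ZMod 2, dotProduct v x = a ∧ dotProduct v y = b := by
  obtain ⟨j, hj⟩ : ∃ j, x j ≠ y j := by
    by_contra h; push_neg at h; exact hxy (funext fun j => h j)
  have key : (∃ p, dotProduct p x = 1 ∧ dotProduct p y = 0) ∧
      (∃ q, dotProduct q x = 0 ∧ dotProduct q y = 1) := by
    rcases zmod2_cases (x j) with hxj | hxj <;> rcases zmod2_cases (y j) with hyj | hyj
    · exact absurd (hxj.trans hyj.symm) hj
    · obtain ⟨p, hp1, hp2⟩ := exists_dot_zero_one n y x hx j hyj hxj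
      exact ⟨⟨p, hp2, hp1⟩, ⟨Pi.single j 1, by simp [single_dotProduct, hxj],
        by simp [single_dotProduct, hyj]⟩⟩
    · exact ⟨⟨Pi.single j 1, by simp [single_dotProduct, hxj],
        by simp [single_dotProduct, hyj]⟩, exists_dot_zero_one n x y hy j hxj hyj⟩
    · exact absurd (hxj.trans hyj.symm) hj
  obtain ⟨⟨p, hp1, hp2⟩, ⟨q, hq1, hq2⟩⟩ := key
  refine ⟨a • p + b • q, ?_, ?_⟩
  · rw [add_dotProduct, smul_dotProduct, smul_dotProduct,
      hp1, hq1, smul_eq_mul, smul_eq_mul, mul_one, mul_zero, add_zero]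
  · rw [add_dotProduct, smul_dotProduct, smul_dotProduct,
      hp2, hq2, smul_eq_mul, smul_eq_mul, mul_zero, mul_one, zero_add]

private lemma count_single (n r : ℕ) (z : Fin n → ZMod 2) (hz : z ≠ 0) :
    (Finset.univ.filter
      (fun H : Matrix (Fin r) (Fin n) (ZMod 2) => H.mulVec z = 0)).card * 2 ^ r
      = Fintype.card (Matrix (Fin r) (Fin n) (ZMod 2)) := by
  classical
  obtain ⟨i, hi⟩ : ∃ i, z i ≠ 0 := by
    by_contra h; push_neg at h; exact hz (funext fun i => h i)
  have hzi : z i = 1 := (zmod2_cases (z i)).resolve_left hi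
  have hsurj : Function.Surjective (mulVecHom n r z) := by
    intro u
    refine ⟨Matrix.of fun k => u k • Pi.single i 1, funext fun k => ?_⟩
    show dotProduct (u k • Pi.single i 1) z = u k
    rw [smul_dotProduct, single_dotProduct, hzi, mul_one, smul_eq_mul, mul_one]
  have := aux_card_ker (mulVecHom n r z) hsurj
  convert this using 2 <;> simp [mulVecHom] <;> congr 1

private lemma count_pair (n r : ℕ) (x y : Fin n → ZMod 2) (hx : x ≠ 0) (hy : y ≠ 0)
    (hxy : x ≠ y) :
    (Finset.univ.filter
      (fun H : Matrix (Fin r) (Fin n) (ZMod 2) => H.mulVec x = 0 ∧ H.mulVec y = 0)).card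
      * (2 ^ r * 2 ^ r)
      = Fintype.card (Matrix (Fin r) (Fin n) (ZMod 2)) := by
  classical
  choose v hv1 hv2 using exists_dot n x y hx hy hxy
  set f : Matrix (Fin r) (Fin n) (ZMod 2) →+ (Fin r → ZMod 2) × (Fin r → ZMod 2) :=
    (mulVecHom n r x).prod (mulVecHom n r y) with hf
  have hsurj : Function.Surjective f := by
    rintro ⟨u, w⟩
    refine ⟨Matrix.of fun k => v (u k) (w k), ?_⟩
    have h1 : (Matrix.of fun k => v (u k) (w k)).mulVec x = u :=
      funext fun k => hv1 (u k) (w k)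
    have h2 : (Matrix.of fun k => v (u k) (w k)).mulVec y = w :=
      funext fun k => hv2 (u k) (w k)
    simp [hf, mulVecHom, AddMonoidHom.prod, h1, h2]
  have := aux_card_ker f hsurj
  simpa [hf, mulVecHom, AddMonoidHom.prod, Prod.ext_iff] using this

/-- For two distinct fixed nonzero vectors `x, y ∈ 𝔽₂ⁿ` and a uniformly
random `r × n` matrix `H` over `𝔽₂`, the probability that both `H·x = 0` and `H·y = 0`
is exactly `2^(-2r)`; in particular the two events are (pairwise) independent. -/
theorem prob_pair_nonzero_in_random_code (n r : ℕ) (hn : 0 < n) (hr : 0 < r)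
    (x y : Fin n → ZMod 2) (hx : x ≠ 0) (hy : y ≠ 0) (hxy : x ≠ y) :
    ((Finset.univ.filter
        (fun H : Matrix (Fin r) (Fin n) (ZMod 2) =>
          H.mulVec x = 0 ∧ H.mulVec y = 0)).card : ℝ) /
        (Fintype.card (Matrix (Fin r) (Fin n) (ZMod 2)) : ℝ)
      = (2 : ℝ) ^ (-(2 * r : ℤ)) ∧
    ((Finset.univ.filter
        (fun H : Matrix (Fin r) (Fin n) (ZMod 2) =>
          H.mulVec x = 0 ∧ H.mulVec y = 0)).card : ℝ) /
        (Fintype.card (Matrix (Fin r) (Fin n) (ZMod 2)) : ℝ)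
      = (((Finset.univ.filter
            (fun H : Matrix (Fin r) (Fin n) (ZMod 2) => H.mulVec x = 0)).card : ℝ) /
          (Fintype.card (Matrix (Fin r) (Fin n) (ZMod 2)) : ℝ)) *
        (((Finset.univ.filter
            (fun H : Matrix (Fin r) (Fin n) (ZMod 2) => H.mulVec y = 0)).card : ℝ) /
          (Fintype.card (Matrix (Fin r) (Fin n) (ZMod 2)) : ℝ)) := by
  classical
  set N := Fintype.card (Matrix (Fin r) (Fin n) (ZMod 2)) with hN
  have hNpos : 0 < N := Fintype.card_pos
  have hNne : (N : ℝ) ≠ 0 := Nat.cast_ne_zero.mpr hNpos.ne'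
  have h2r : (2 : ℝ) ^ r ≠ 0 := pow_ne_zero _ two_ne_zero
  have epair : ((Finset.univ.filter
      (fun H : Matrix (Fin r) (Fin n) (ZMod 2) =>
        H.mulVec x = 0 ∧ H.mulVec y = 0)).card : ℝ) * (2 ^ r * 2 ^ r) = N := by
    exact_mod_cast congrArg (Nat.cast : ℕ → ℝ) (count_pair n r x y hx hy hxy)
  have ex : ((Finset.univ.filter
      (fun H : Matrix (Fin r) (Fin n) (ZMod 2) => H.mulVec x = 0)).card : ℝ) * 2 ^ r = N := by
    exact_mod_cast congrArg (Nat.cast : ℕ → ℝ) (count_single n r x hx)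
  have ey : ((Finset.univ.filter
      (fun H : Matrix (Fin r) (Fin n) (ZMod 2) => H.mulVec y = 0)).card : ℝ) * 2 ^ r = N := by
    exact_mod_cast congrArg (Nat.cast : ℕ → ℝ) (count_single n r y hy)
  have hz : (2 : ℝ) ^ (-(2 * r : ℤ)) = ((2 : ℝ) ^ r * (2 : ℝ) ^ r)⁻¹ := by
    rw [zpow_neg]
    congr 1
    rw [show ((2 : ℤ) * r) = ((2 * r : ℕ) : ℤ) by push_cast; ring, zpow_natCast, two_mul, pow_add]
  constructor
  · rw [hz, div_eq_iff hNne, ← epair]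
    field_simp
  · rw [div_mul_div_comm, div_eq_div_iff hNne (by positivity)]
    have h2 : ((Finset.univ.filter
        (fun H : Matrix (Fin r) (Fin n) (ZMod 2) => H.mulVec x = 0)).card : ℝ) *
        ((Finset.univ.filter
        (fun H : Matrix (Fin r) (Fin n) (ZMod 2) => H.mulVec y = 0)).card : ℝ) *
        (2 ^ r * 2 ^ r) = (N : ℝ) * N := by
      linear_combination (((Finset.univ.filter
        (fun H : Matrix (Fin r) (Fin n) (ZMod 2) => H.mulVec y = 0)).card : ℝ) * 2 ^ r) * ex
        + (N : ℝ) * ey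
    have h3 : ((Finset.univ.filter
        (fun H : Matrix (Fin r) (Fin n) (ZMod 2) =>
          H.mulVec x = 0 ∧ H.mulVec y = 0)).card : ℝ) * (2 ^ r * 2 ^ r) * N
        = (N : ℝ) * N := by rw [epair]
    have key : ((Finset.univ.filter
        (fun H : Matrix (Fin r) (Fin n) (ZMod 2) =>
          H.mulVec x = 0 ∧ H.mulVec y = 0)).card : ℝ) * N
        = ((Finset.univ.filter
        (fun H : Matrix (Fin r) (Fin n) (ZMod 2) => H.mulVec x = 0)).card : ℝ) *
        ((Finset.univ.filter
        (fun H : Matrix (Fin r) (Fin n) (ZMod 2) => H.mulVec y = 0)).card : ℝ) := by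
      apply mul_right_cancel₀ (mul_ne_zero h2r h2r)
      linear_combination h3 - h2
    linear_combination (N : ℝ) * key
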